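/- For every l with 0 ≤ l ≤ M−1, Tr(ρ_c · O_l) = c_l/α²; furthermore Tr(ρ_c · O_α) = 1/α². -/

import Mathlib

open Matrix Kronecker

/-- The maximally entangled state `Φ_d = (1/√d) ∑ i, e_i ⊗ e_i` on `ℂ^d ⊗ ℂ^d`. -/
noncomputable def Phi (d : ℕ) : Fin d × Fin d → ℂ :=
  fun p => if p.1 = p.2 then ((1 / Real.sqrt d : ℝ) : ℂ) else 0

/-- Tensor product `v ⊗ e_b` of a vector `v : ι → ℂ` with the standard basis vector
`e_b` of `ℂ²`. -/
def vecTens {ι : Type*} (v : ι → ℂ) (b : Fin 2) : ι × Fin 2 → ℂ :=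
  fun q => v q.1 * (if q.2 = b then 1 else 0)

private lemma trace_vmv {n : Type*} [Fintype n] (a b : n → ℂ) (Mm : Matrix n n ℂ) :
    (vecMulVec a b * Mm).trace = b ⬝ᵥ (Mm *ᵥ a) := by
  simp only [trace, diag, mul_apply, vecMulVec_apply, dotProduct, mulVec, Finset.mul_sum]
  rw [Finset.sum_comm]
  exact Finset.sum_congr rfl fun j _ => Finset.sum_congr rfl fun i _ => by ring

private lemma kron_one_mulVec_Phi (d : ℕ) (A : Matrix (Fin d) (Fin d) ℂ) :
    ((A ⊗ₖ (1 : Matrix (Fin d) (Fin d) ℂ)) *ᵥ Phi d)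
      = fun p => A p.1 p.2 * ((1 / Real.sqrt d : ℝ) : ℂ) := by
  funext p
  simp [mulVec, dotProduct, Phi, Fintype.sum_prod_type, kroneckerMap_apply, one_apply,
    mul_ite, ite_and, Finset.sum_ite_eq, Finset.sum_ite_eq']

private lemma factor_trace (d : ℕ) (w : Fin d × Fin d → ℂ) (r : Fin 2)
    (ψ : (Fin d × Fin d) × Fin 2 → ℂ) :
    star ψ ⬝ᵥ ((vecMulVec w (star (Phi d)) ⊗ₖ Matrix.single r 1 (1:ℂ)) *ᵥ ψ)
      = (∑ p, starRingEnd ℂ (ψ (p, r)) * w p) * (∑ p, starRingEnd ℂ (Phi d p) * ψ (p, 1)) := by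
  rw [Finset.sum_mul_sum]
  simp only [dotProduct, mulVec, Fintype.sum_prod_type, Fin.sum_univ_two,
    kroneckerMap_apply, vecMulVec_apply, Matrix.single, Pi.star_apply, Complex.star_def,
    of_apply, ite_and, Finset.sum_mul, Finset.mul_sum]
  fin_cases r <;> simp <;>
  exact Finset.sum_congr rfl fun i _ => Finset.sum_congr rfl fun j _ =>
    Finset.sum_congr rfl fun x _ => Finset.sum_congr rfl fun y _ => by ring

private lemma Phi_norm (d : ℕ) (hd : 0 < d) :
    ∑ p, starRingEnd ℂ (Phi d p) * Phi d p = 1 := by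
  have h : ((1 / Real.sqrt d : ℝ) : ℂ) * ((1 / Real.sqrt d : ℝ) : ℂ) = 1 / (d : ℂ) := by
    rw [← Complex.ofReal_mul, div_mul_div_comm, one_mul,
      Real.mul_self_sqrt (by positivity)]
    push_cast; ring
  simp only [Phi, Fintype.sum_prod_type, apply_ite, map_zero, Complex.conj_ofReal,
    ite_mul, zero_mul, mul_ite, mul_zero, Finset.sum_ite_eq, Finset.mem_univ, if_true, h]
  rw [Finset.sum_const, Finset.card_univ, Fintype.card_fin, nsmul_eq_mul, mul_one_div,
    div_self (by exact_mod_cast hd.ne' : (d:ℂ) ≠ 0)]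

/-- for the pseudo-Choi state `ρ_c`,
`Tr(ρ_c · O_l) = c_l/α²` for every `l`, and `Tr(ρ_c · O_α) = 1/α²`. -/
theorem pseudoChoi_decoding (d M : ℕ) (hd : 0 < d) (hM : 0 < M)
    (Hm : Fin M → Matrix (Fin d) (Fin d) ℂ)
    (hherm : ∀ m, (Hm m).IsHermitian)
    (hunit : ∀ m, Hm m ∈ Matrix.unitaryGroup (Fin d) ℂ)
    (hortho : ∀ j k, (Hm j * Hm k).trace / (d : ℂ) = if j = k then 1 else 0)
    (c : Fin M → ℝ)
    (H : Matrix (Fin d) (Fin d) ℂ) (hH : H = ∑ m, (c m : ℂ) • Hm m)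
    (α : ℝ) (hα : α = Real.sqrt (∑ m, c m ^ 2 + 1))
    (ψ : (Fin d × Fin d) × Fin 2 → ℂ)
    (hψ : ψ = fun q =>
      (vecTens ((H ⊗ₖ (1 : Matrix (Fin d) (Fin d) ℂ)).mulVec (Phi d)) 0 q
        + vecTens (Phi d) 1 q) / (α : ℂ))
    (ρc : Matrix ((Fin d × Fin d) × Fin 2) ((Fin d × Fin d) × Fin 2) ℂ)
    (hρ : ρc = Matrix.vecMulVec ψ (star ψ)) :
    (∀ l : Fin M,
      (ρc * (Matrix.vecMulVec ((Hm l ⊗ₖ (1 : Matrix (Fin d) (Fin d) ℂ)).mulVec (Phi d))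
            (star (Phi d))
          ⊗ₖ Matrix.single (0 : Fin 2) (1 : Fin 2) (1 : ℂ))).trace
        = (c l : ℂ) / (α : ℂ) ^ 2)
    ∧ (ρc * (Matrix.vecMulVec (Phi d) (star (Phi d))
          ⊗ₖ Matrix.single (1 : Fin 2) (1 : Fin 2) (1 : ℂ))).trace
        = 1 / (α : ℂ) ^ 2 := by
  set s : ℂ := ((1 / Real.sqrt d : ℝ) : ℂ) with hs
  have hdC : (d : ℂ) ≠ 0 := by exact_mod_cast hd.ne'
  have hs2 : s * s = 1 / (d : ℂ) := by
    rw [hs, ← Complex.ofReal_mul, div_mul_div_comm, one_mul,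
      Real.mul_self_sqrt (by positivity)]
    push_cast; ring
  have hαpos : 0 < α := by
    rw [hα]; exact Real.sqrt_pos.mpr (by positivity)
  have hα0 : (α : ℂ) ≠ 0 := by exact_mod_cast hαpos.ne'
  have hψ1 : ∀ p, ψ (p, 1) = Phi d p / α := by
    intro p; simp [hψ, vecTens]
  have hψ0 : ∀ p, ψ (p, 0) = H p.1 p.2 * s / α := by
    intro p; simp [hψ, vecTens, kron_one_mulVec_Phi, hs]
  have hdot1 : (∑ p, starRingEnd ℂ (Phi d p) * ψ (p, 1)) = 1 / α := by
    have h : ∀ p : Fin d × Fin d, starRingEnd ℂ (Phi d p) * (Phi d p / α)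
        = (starRingEnd ℂ (Phi d p) * Phi d p) / α := fun p => by ring
    simp_rw [hψ1, h, ← Finset.sum_div, Phi_norm d hd]
  -- Hermitian property of H entrywise
  have hm : ∀ m (i j : Fin d), starRingEnd ℂ (Hm m i j) = Hm m j i := by
    intro m i j; simpa using (hherm m).apply j i
  have hHconj : ∀ i j, starRingEnd ℂ (H i j) = H j i := by
    intro i j
    rw [hH]
    simp only [Matrix.sum_apply, Matrix.smul_apply, smul_eq_mul, map_sum,
      _root_.map_mul, Complex.conj_ofReal, hm]
  constructor
  · intro l
    rw [hρ, trace_vmv, factor_trace, hdot1]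
    have htr : (H * Hm l).trace = (d : ℂ) * c l := by
      have h1 := hortho
      rw [hH, Finset.sum_mul]
      rw [trace_sum]
      have : ∀ m, ((c m : ℂ) • Hm m * Hm l).trace = (c m : ℂ) * ((Hm m * Hm l).trace) := by
        intro m; rw [smul_mul_assoc, trace_smul, smul_eq_mul]
      simp_rw [this]
      have h2 : ∀ m, (Hm m * Hm l).trace = if m = l then (d : ℂ) else 0 := by
        intro m
        have h := hortho m l
        field_simp at h
        rw [h, mul_ite, mul_one, mul_zero]
      simp_rw [h2, mul_ite, mul_zero, Finset.sum_ite_eq', Finset.mem_univ, if_true]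
      ring
    have hfirst : (∑ p : Fin d × Fin d, starRingEnd ℂ (ψ (p, 0))
        * ((Hm l ⊗ₖ (1 : Matrix (Fin d) (Fin d) ℂ)) *ᵥ Phi d) p) = (c l : ℂ) / α := by
      simp_rw [hψ0, kron_one_mulVec_Phi]
      simp only [map_div₀, _root_.map_mul, hHconj]
      have hcs : (starRingEnd ℂ) s = s := by rw [hs]; exact Complex.conj_ofReal _
      have hca : (starRingEnd ℂ) (α : ℂ) = (α : ℂ) := Complex.conj_ofReal _
      simp only [hcs, hca]
      have hst : ∀ p : Fin d × Fin d,
          H p.2 p.1 * s / (α : ℂ) * (Hm l p.1 p.2 * ((1 / Real.sqrt d : ℝ) : ℂ))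
            = (s * s) / (α : ℂ) * (H p.2 p.1 * Hm l p.1 p.2) := by
        intro p; rw [← hs]; ring
      simp only [hst]
      rw [← Finset.mul_sum]
      have hsum : (∑ p : Fin d × Fin d, H p.2 p.1 * Hm l p.1 p.2) = (H * Hm l).trace := by
        rw [trace]
        simp only [Fintype.sum_prod_type, diag, mul_apply]
        rw [Finset.sum_comm]
      rw [hsum, htr, hs2]
      field_simp
    rw [hfirst]
    rw [div_mul_div_comm, mul_one, sq]
  · rw [hρ, trace_vmv, factor_trace, hdot1]
    have hkey : (∑ p : Fin d × Fin d, starRingEnd ℂ (ψ (p, 1)) * Phi d p) = 1 / α := by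
      have h1 : ∀ p : Fin d × Fin d, starRingEnd ℂ (ψ (p, 1)) * Phi d p
          = (starRingEnd ℂ (Phi d p) * Phi d p) / α := by
        intro p
        rw [hψ1, map_div₀, Complex.conj_ofReal]
        ring
      simp only [h1]
      rw [← Finset.sum_div, Phi_norm d hd]
    rw [hkey, div_mul_div_comm, mul_one, sq]
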